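/- Separability is preserved under taking marginals of classically-indexed ensembles: if (ρ_g)_{g∈G} is a finite family of positive operators on H_A ⊗ H_B, each separable, then the marginal ∑_{g∈G} ρ_g is separable; conversely, if the marginal of an ensemble obtained from a product input by a classically-mediated protocol were entangled, at least one ρ_g would have to be entangled — which, combined with the round-by-round separability lemma, yields the full no-go theorem statement that gravity cannot (1) generate entanglement while (2) mediating via (3) a classical system. -/

import Mathlib

open Matrix Finset
open scoped Kronecker ComplexOrder

/-- Extend a map on `A`-matrices to act on the first factor of `A × R`-matrices
(identity on the second factor). -/
noncomputable def blockFst {A B R : Type*} [Fintype A] [Fintype B] [Fintype R]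
    (E : Matrix A A ℂ →ₗ[ℂ] Matrix B B ℂ)
    (M : Matrix (A × R) (A × R) ℂ) : Matrix (B × R) (B × R) ℂ :=
  fun p q => E (fun i j => M (i, p.2) (j, q.2)) p.1 q.1

/-- Extend a map on `B`-matrices to act on the second factor of `R × B`-matrices. -/
noncomputable def blockSnd {B C R : Type*} [Fintype B] [Fintype C] [Fintype R]
    (E : Matrix B B ℂ →ₗ[ℂ] Matrix C C ℂ)
    (M : Matrix (R × B) (R × B) ℂ) : Matrix (R × C) (R × C) ℂ :=
  fun p q => E (fun i j => M (p.1, i) (q.1, j)) p.2 q.2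

/-- Complete positivity: the extension by any finite-dimensional identity preserves
positive semidefiniteness. -/
def IsCP {A : Type*} [Fintype A] (E : Matrix A A ℂ →ₗ[ℂ] Matrix A A ℂ) : Prop :=
  ∀ (R : Type) [Fintype R] [DecidableEq R],
    ∀ M : Matrix (A × R) (A × R) ℂ, M.PosSemidef → (blockFst E M).PosSemidef

def TraceNonincreasing {A : Type*} [Fintype A]
    (E : Matrix A A ℂ →ₗ[ℂ] Matrix A A ℂ) : Prop :=
  ∀ M : Matrix A A ℂ, M.PosSemidef → ((E M).trace).re ≤ (M.trace).re

def TracePreserving {A : Type*} [Fintype A]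
    (E : Matrix A A ℂ →ₗ[ℂ] Matrix A A ℂ) : Prop :=
  ∀ M : Matrix A A ℂ, (E M).trace = M.trace

/-- The tensor product map `E_A ⊗ E_B` acting on `(A × B)`-matrices. -/
noncomputable def prodMap {A B : Type*} [Fintype A] [Fintype B]
    (EA : Matrix A A ℂ →ₗ[ℂ] Matrix A A ℂ) (EB : Matrix B B ℂ →ₗ[ℂ] Matrix B B ℂ)
    (M : Matrix (A × B) (A × B) ℂ) : Matrix (A × B) (A × B) ℂ :=
  blockSnd EB (blockFst EA M)

/-- The cone of separable positive operators. -/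
def SepCone {A B : Type*} [Fintype A] [Fintype B]
    (M : Matrix (A × B) (A × B) ℂ) : Prop :=
  ∃ (n : ℕ) (σA : Fin n → Matrix A A ℂ) (σB : Fin n → Matrix B B ℂ),
    (∀ i, (σA i).PosSemidef) ∧ (∀ i, (σB i).PosSemidef) ∧
    M = ∑ i, σA i ⊗ₖ σB i

def IsDensity {A : Type*} [Fintype A] (ρ : Matrix A A ℂ) : Prop :=
  ρ.PosSemidef ∧ ρ.trace = 1

/-- Separable state: convex combination of product density operators. -/
def SepState {A B : Type*} [Fintype A] [Fintype B]
    (M : Matrix (A × B) (A × B) ℂ) : Prop :=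
  ∃ (n : ℕ) (p : Fin n → ℝ) (σA : Fin n → Matrix A A ℂ) (σB : Fin n → Matrix B B ℂ),
    (∀ i, 0 ≤ p i) ∧ (∑ i, p i = 1) ∧
    (∀ i, IsDensity (σA i)) ∧ (∀ i, IsDensity (σB i)) ∧
    M = ∑ i, (p i : ℂ) • (σA i ⊗ₖ σB i)

/-- One round of an A–G quantum-classical interaction acting on a `G`-indexed ensemble of
joint `A ⊗ B` operators: the classical register is measured and updated while the CP map
`E g g'` acts locally on `A`. -/
noncomputable def stepA {A B G : Type*} [Fintype A] [Fintype B] [Fintype G]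
    (E : G → G → (Matrix A A ℂ →ₗ[ℂ] Matrix A A ℂ))
    (ρ : G → Matrix (A × B) (A × B) ℂ) : G → Matrix (A × B) (A × B) ℂ :=
  fun g' => ∑ g, blockFst (E g g') (ρ g)

/-- One round of a B–G quantum-classical interaction, acting locally on `B`. -/
noncomputable def stepB {A B G : Type*} [Fintype A] [Fintype B] [Fintype G]
    (E : G → G → (Matrix B B ℂ →ₗ[ℂ] Matrix B B ℂ))
    (ρ : G → Matrix (A × B) (A × B) ℂ) : G → Matrix (A × B) (A × B) ℂ :=
  fun g' => ∑ g, blockSnd (E g g') (ρ g)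

/-- A quantum-classical interaction: each branch is completely positive and for each classical
input the total map is trace preserving. -/
def IsQCInteraction {A G : Type*} [Fintype A] [Fintype G]
    (E : G → G → (Matrix A A ℂ →ₗ[ℂ] Matrix A A ℂ)) : Prop :=
  (∀ g g', IsCP (E g g')) ∧
  (∀ g, ∀ M : Matrix A A ℂ, ∑ g', ((E g g') M).trace = M.trace)

/-- `n` rounds of alternating A–G and B–G quantum-classical interactions. -/
noncomputable def evolve {A B G : Type*} [Fintype A] [Fintype B] [Fintype G]
    (IA : ℕ → G → G → (Matrix A A ℂ →ₗ[ℂ] Matrix A A ℂ))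
    (IB : ℕ → G → G → (Matrix B B ℂ →ₗ[ℂ] Matrix B B ℂ)) :
    ℕ → (G → Matrix (A × B) (A × B) ℂ) → (G → Matrix (A × B) (A × B) ℂ)
  | 0, ρ => ρ
  | n + 1, ρ => stepB (IB n) (stepA (IA n) (evolve IA IB n ρ))

section Aux
variable {A B G : Type*} [Fintype A] [Fintype B] [Fintype G]

lemma sepCone_zero : SepCone (0 : Matrix (A × B) (A × B) ℂ) :=
  ⟨0, ![], ![], by simp, by simp, by simp⟩

lemma sepCone_add {M N : Matrix (A × B) (A × B) ℂ}
    (hM : SepCone M) (hN : SepCone N) : SepCone (M + N) := by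
  obtain ⟨m, σA, σB, hA, hB, rfl⟩ := hM
  obtain ⟨k, τA, τB, hA', hB', rfl⟩ := hN
  refine ⟨m + k, Fin.addCases σA τA, Fin.addCases σB τB, ?_, ?_, ?_⟩
  · intro i; refine Fin.addCases (fun j => ?_) (fun j => ?_) i <;> simp [hA, hA']
  · intro i; refine Fin.addCases (fun j => ?_) (fun j => ?_) i <;> simp [hB, hB']
  · rw [Fin.sum_univ_add]
    simp

lemma sepCone_sum {ι : Type*} (s : Finset ι) (f : ι → Matrix (A × B) (A × B) ℂ)
    (h : ∀ i ∈ s, SepCone (f i)) : SepCone (∑ i ∈ s, f i) := by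
  classical
  induction s using Finset.induction_on with
  | empty => simpa using sepCone_zero
  | insert _ _ hx ih =>
    rw [Finset.sum_insert hx]
    exact sepCone_add (h _ (Finset.mem_insert_self _ _))
      (ih fun i hi => h i (Finset.mem_insert_of_mem hi))

lemma cp_posSemidef {E : Matrix A A ℂ →ₗ[ℂ] Matrix A A ℂ} (hE : IsCP E)
    {M : Matrix A A ℂ} (hM : M.PosSemidef) : (E M).PosSemidef := by
  have hM' : (M.submatrix (Prod.fst : A × Unit → A) Prod.fst).PosSemidef :=
    hM.submatrix _
  have h2 := hE Unit _ hM'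
  have h3 := h2.submatrix (fun i : A => ((i, ()) : A × Unit))
  convert h3 using 1
  ext i j; rfl

lemma blockFst_kron (E : Matrix A A ℂ →ₗ[ℂ] Matrix A A ℂ)
    (σA : Matrix A A ℂ) (σB : Matrix B B ℂ) :
    blockFst E (σA ⊗ₖ σB) = (E σA) ⊗ₖ σB := by
  ext p q
  have h1 : (fun i j => (σA ⊗ₖ σB) (i, p.2) (j, q.2)) = σB p.2 q.2 • σA := by
    ext i j; simp [Matrix.kroneckerMap_apply, Matrix.smul_apply, mul_comm]
  simp only [blockFst, h1, _root_.map_smul]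
  simp [Matrix.kroneckerMap_apply, mul_comm]

lemma blockSnd_kron (E : Matrix B B ℂ →ₗ[ℂ] Matrix B B ℂ)
    (σA : Matrix A A ℂ) (σB : Matrix B B ℂ) :
    blockSnd E (σA ⊗ₖ σB) = σA ⊗ₖ (E σB) := by
  ext p q
  have h1 : (fun i j => (σA ⊗ₖ σB) (p.1, i) (q.1, j)) = σA p.1 q.1 • σB := by
    ext i j; simp [Matrix.kroneckerMap_apply, Matrix.smul_apply]
  simp only [blockSnd, h1, _root_.map_smul]
  simp [Matrix.kroneckerMap_apply]

lemma blockFst_sum {ι : Type*} (E : Matrix A A ℂ →ₗ[ℂ] Matrix A A ℂ)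
    (s : Finset ι) (f : ι → Matrix (A × B) (A × B) ℂ) :
    blockFst E (∑ i ∈ s, f i) = ∑ i ∈ s, blockFst E (f i) := by
  ext p q
  have h1 : (fun i j => (∑ x ∈ s, f x) (i, p.2) (j, q.2))
      = ∑ x ∈ s, (fun i j => f x (i, p.2) (j, q.2)) := by
    ext i j
    simp [Matrix.sum_apply]
  simp only [blockFst, h1, map_sum]
  simp [blockFst, Matrix.sum_apply]
  have h2 := map_sum E (fun x => (fun i j => f x (i, p.2) (j, q.2) : Matrix A A ℂ)) s
  exact (congrArg (fun M : Matrix A A ℂ => M p.1 q.1) h2).trans (by simp [Matrix.sum_apply]; rfl)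

lemma blockSnd_sum {ι : Type*} (E : Matrix B B ℂ →ₗ[ℂ] Matrix B B ℂ)
    (s : Finset ι) (f : ι → Matrix (A × B) (A × B) ℂ) :
    blockSnd E (∑ i ∈ s, f i) = ∑ i ∈ s, blockSnd E (f i) := by
  ext p q
  have h1 : (fun i j => (∑ x ∈ s, f x) (p.1, i) (q.1, j))
      = ∑ x ∈ s, (fun i j => f x (p.1, i) (q.1, j)) := by
    ext i j
    simp [Matrix.sum_apply]
  simp only [blockSnd, h1, map_sum]
  simp [blockSnd, Matrix.sum_apply]
  have h2 := map_sum E (fun x => (fun i j => f x (p.1, i) (q.1, j) : Matrix B B ℂ)) s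
  exact (congrArg (fun M : Matrix B B ℂ => M p.2 q.2) h2).trans (by simp [Matrix.sum_apply]; rfl)

lemma sepCone_blockFst {E : Matrix A A ℂ →ₗ[ℂ] Matrix A A ℂ} (hE : IsCP E)
    {M : Matrix (A × B) (A × B) ℂ} (hM : SepCone M) : SepCone (blockFst E M) := by
  obtain ⟨m, σA, σB, hA, hB, rfl⟩ := hM
  rw [blockFst_sum]
  refine ⟨m, fun i => E (σA i), σB, fun i => cp_posSemidef hE (hA i), hB, ?_⟩
  exact Finset.sum_congr rfl fun i _ => blockFst_kron _ _ _

lemma sepCone_blockSnd {E : Matrix B B ℂ →ₗ[ℂ] Matrix B B ℂ} (hE : IsCP E)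
    {M : Matrix (A × B) (A × B) ℂ} (hM : SepCone M) : SepCone (blockSnd E M) := by
  obtain ⟨m, σA, σB, hA, hB, rfl⟩ := hM
  rw [blockSnd_sum]
  refine ⟨m, σA, fun i => E (σB i), hA, fun i => cp_posSemidef hE (hB i), ?_⟩
  exact Finset.sum_congr rfl fun i _ => blockSnd_kron _ _ _

lemma sepCone_stepA {E : G → G → (Matrix A A ℂ →ₗ[ℂ] Matrix A A ℂ)}
    (hE : ∀ g g', IsCP (E g g')) {ρ : G → Matrix (A × B) (A × B) ℂ}
    (hρ : ∀ g, SepCone (ρ g)) : ∀ g', SepCone (stepA E ρ g') := fun g' =>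
  sepCone_sum _ _ fun g _ => sepCone_blockFst (hE g g') (hρ g)

lemma sepCone_stepB {E : G → G → (Matrix B B ℂ →ₗ[ℂ] Matrix B B ℂ)}
    (hE : ∀ g g', IsCP (E g g')) {ρ : G → Matrix (A × B) (A × B) ℂ}
    (hρ : ∀ g, SepCone (ρ g)) : ∀ g', SepCone (stepB E ρ g') := fun g' =>
  sepCone_sum _ _ fun g _ => sepCone_blockSnd (hE g g') (hρ g)

lemma posSemidef_real_smul {M : Matrix A A ℂ} (hM : M.PosSemidef)
    {c : ℝ} (hc : 0 ≤ c) : ((c : ℂ) • M).PosSemidef := by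
  constructor
  · unfold Matrix.IsHermitian
    rw [Matrix.conjTranspose_smul, hM.isHermitian.eq]
    congr 1
    simp
  · intro x
    obtain ⟨h1, h2⟩ := Complex.le_def.mp (hM.2 x)
    simp only [Complex.zero_re, Complex.zero_im] at h1 h2
    have hs : (x.sum fun i xi => x.sum fun j xj => star xi * ((c : ℂ) • M) i j * xj)
        = (c : ℂ) * (x.sum fun i xi => x.sum fun j xj => star xi * M i j * xj) := by
      simp only [Finsupp.sum, Finset.mul_sum, Matrix.smul_apply, smul_eq_mul]
      exact Finset.sum_congr rfl fun i _ => Finset.sum_congr rfl fun j _ => by ring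
    rw [hs]
    rw [Complex.le_def]
    constructor
    · simp only [Complex.zero_re, Complex.mul_re, Complex.ofReal_re, Complex.ofReal_im]
      nlinarith
    · simp only [Complex.zero_im, Complex.mul_im, Complex.ofReal_re, Complex.ofReal_im]
      rw [← h2]; simp

end Aux

/-- Separability is preserved under marginals of classically-indexed ensembles; conversely an
entangled marginal requires an entangled component; combined with round-by-round separability
of classically-mediated protocols this yields the no-go theorem: a classical mediator cannot
generate entanglement. -/
theorem marginal_separability_no_go
    {A B G : Type*} [Fintype A] [Fintype B] [Fintype G] :
    (∀ ρ : G → Matrix (A × B) (A × B) ℂ,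
      (∀ g, SepCone (ρ g)) → SepCone (∑ g, ρ g)) ∧
    (∀ ρ : G → Matrix (A × B) (A × B) ℂ,
      ¬ SepCone (∑ g, ρ g) → ∃ g, ¬ SepCone (ρ g)) ∧
    (∀ (n : ℕ)
      (IA : ℕ → G → G → (Matrix A A ℂ →ₗ[ℂ] Matrix A A ℂ))
      (IB : ℕ → G → G → (Matrix B B ℂ →ₗ[ℂ] Matrix B B ℂ)),
      (∀ k, IsQCInteraction (IA k)) → (∀ k, IsQCInteraction (IB k)) →
      ∀ (ρA : Matrix A A ℂ) (ρB : Matrix B B ℂ), IsDensity ρA → IsDensity ρB →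
      ∀ p : G → ℝ, (∀ g, 0 ≤ p g) → (∑ g, p g = 1) →
      (∀ g, SepCone (evolve IA IB n (fun g' => (p g' : ℂ) • (ρA ⊗ₖ ρB)) g)) ∧
      SepCone (∑ g, evolve IA IB n (fun g' => (p g' : ℂ) • (ρA ⊗ₖ ρB)) g)) := by
  classical
  have part1 : ∀ ρ : G → Matrix (A × B) (A × B) ℂ,
      (∀ g, SepCone (ρ g)) → SepCone (∑ g, ρ g) := fun ρ h =>
    sepCone_sum _ _ fun g _ => h g
  refine ⟨part1, ?_, ?_⟩
  · intro ρ h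
    by_contra hc
    push_neg at hc
    exact h (part1 ρ hc)
  · intro n IA IB hIA hIB ρA ρB hρA hρB p hp hp1
    have key : ∀ g, SepCone (evolve IA IB n (fun g' => (p g' : ℂ) • (ρA ⊗ₖ ρB)) g) := by
      induction n with
      | zero =>
        intro g
        simp only [evolve]
        refine ⟨1, fun _ => (p g : ℂ) • ρA, fun _ => ρB,
          fun _ => posSemidef_real_smul hρA.1 (hp g), fun _ => hρB.1, ?_⟩
        simp [Matrix.smul_kronecker]
      | succ n ih =>
        simp only [evolve]
        exact sepCone_stepB (hIB n).1 (sepCone_stepA (hIA n).1 ih)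
    exact ⟨key, part1 _ key⟩
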